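/- For every a ∈ (0, 1/2) and every γ ≥ 0: 1 - γ a log a/(1-a) ≥ (1/2 + a)^γ (1 + γ log 2), with strict inequality when γ > 0. -/

import Mathlib

open Real

/-- Positivity of the derivative of `x * log x + (1-x) * log (1+2x)` on `[1/4, 1/2]`. -/
lemma aux_deriv_pos (a : ℝ) (h1 : 1/4 ≤ a) (h2 : a ≤ 1/2) :
    0 < log a - log (1 + 2*a) + 3/(1 + 2*a) := by
  have ha0 : (0:ℝ) < a := by linarith
  have hw : (0:ℝ) < 1 + 2*a := by linarith
  set z : ℝ := 3/(1+2*a) with hz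
  have hz0 : 0 ≤ z := by positivity
  have hS : 1 + z + z^2/2 + z^3/6 + z^4/24 ≤ exp z := by
    have h := Real.sum_le_exp_of_nonneg hz0 5
    simp [Finset.sum_range_succ, Nat.factorial] at h
    linarith [h]
  have hs : (0:ℝ) ≤ a - 1/4 := by linarith
  have ht : (0:ℝ) ≤ 1/2 - a := by linarith
  have hpoly : (1+2*a)^5 < a * ((1+2*a)^4 + 3*(1+2*a)^3 + (9/2)*(1+2*a)^2 + (9/2)*(1+2*a) + 27/8) := by
    nlinarith [mul_nonneg hs ht, mul_nonneg (mul_nonneg hs hs) ht,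
      mul_nonneg (mul_nonneg (mul_nonneg hs hs) hs) ht,
      mul_nonneg (mul_nonneg (mul_nonneg (mul_nonneg hs hs) hs) hs) ht,
      mul_nonneg (mul_nonneg hs hs) (mul_nonneg ht ht),
      mul_nonneg hs (mul_nonneg ht ht), sq_nonneg (a-1/4), sq_nonneg (1/2-a)]
  have hSa : (1+2*a) < (1 + z + z^2/2 + z^3/6 + z^4/24) * a := by
    have he : (1 + z + z^2/2 + z^3/6 + z^4/24) * a
        = a * ((1+2*a)^4 + 3*(1+2*a)^3 + (9/2)*(1+2*a)^2 + (9/2)*(1+2*a) + 27/8) / (1+2*a)^4 := by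
      rw [hz]; field_simp; ring
    rw [he, lt_div_iff₀ (by positivity)]
    nlinarith [hpoly, pow_pos hw 4]
  have hmain : (1+2*a) < exp z * a :=
    lt_of_lt_of_le hSa (mul_le_mul_of_nonneg_right hS ha0.le)
  have hlog := Real.log_lt_log hw hmain
  rw [Real.log_mul (exp_pos z).ne' ha0.ne', Real.log_exp] at hlog
  linarith

/-- The derivative of `x * log x + (1-x) * log (1+2x)`. -/
lemma aux_hasDerivAt (x : ℝ) (hx : 0 < x) :
    HasDerivAt (fun y : ℝ => y * log y + (1-y) * log (1+2*y))
      (log x - log (1+2*x) + 3/(1+2*x)) x := by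
  have hw : (0:ℝ) < 1 + 2*x := by linarith
  have h1 : HasDerivAt (fun y : ℝ => y * log y) (log x + 1) x :=
    Real.hasDerivAt_mul_log hx.ne'
  have h2 : HasDerivAt (fun y : ℝ => 1 + 2*y) 2 x := by
    simpa using ((hasDerivAt_id x).const_mul 2).const_add 1
  have h3 : HasDerivAt (fun y : ℝ => log (1+2*y)) (2/(1+2*x)) x := h2.log hw.ne'
  have h4 : HasDerivAt (fun y : ℝ => 1 - y) (-1) x := by
    simpa using (hasDerivAt_id x).const_sub 1
  have h5 := h4.mul h3
  have h6 := h1.add h5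
  refine h6.congr_deriv ?_
  field_simp
  ring

set_option maxHeartbeats 1000000 in
/-- Key inequality: `a log a + (1-a) log (1+2a) ≤ 0` for `a ∈ (0, 1/2)`. -/
lemma key_ineq (a : ℝ) (ha0 : 0 < a) (ha2 : a < 1/2) :
    a * log a + (1-a) * log (1+2*a) ≤ 0 := by
  rcases le_or_gt a (1/4) with ha4 | ha4
  · -- Region A : 0 < a ≤ 1/4, via tangent-line and Taylor bounds
    have h4a : (0:ℝ) < 4*a := by linarith
    have hlog4 : Real.log (4*a) = 2 * Real.log 2 + Real.log a := by
      rw [Real.log_mul (by norm_num) ha0.ne', show (4:ℝ) = 2^2 by norm_num, Real.log_pow]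
      push_cast; ring
    have h1 : log a ≤ 4*a - 1 - 2*log 2 := by
      have := Real.log_le_sub_one_of_pos h4a
      rw [hlog4] at this; linarith
    have habs : |(-(2*a))| < 1 := by rw [abs_neg, abs_of_pos (by linarith)]; linarith
    have h2 := Real.abs_log_sub_add_sum_range_le habs 5
    rw [abs_neg, abs_of_pos (by linarith : (0:ℝ) < 2*a)] at h2
    simp [Finset.sum_range_succ] at h2
    rw [abs_le] at h2
    have h2' : log (1+2*a) ≤ 2*a - (2*a)^2/2 + (2*a)^3/3 - (2*a)^4/4 + (2*a)^5/5 + (2*a)^6/(1-2*a) := by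
      nlinarith [h2.2]
    have hrem : (2*a)^6/(1-2*a) ≤ 2*(2*a)^6 := by
      rw [div_le_iff₀ (by linarith)]
      nlinarith [pow_nonneg (by linarith : (0:ℝ) ≤ 2*a) 6]
    have h2'' : log (1+2*a) ≤ 2*a - (2*a)^2/2 + (2*a)^3/3 - (2*a)^4/4 + (2*a)^5/5 + 2*(2*a)^6 := by
      linarith
    have hl2 := Real.log_two_gt_d9
    have hfin : a*(4*a-1-2*(log 2)) + (1-a)*(2*a - (2*a)^2/2 + (2*a)^3/3 - (2*a)^4/4 + (2*a)^5/5 + 2*(2*a)^6) ≤ 0 := by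
      have h116 : (0:ℝ) ≤ 1/16 - a^2 := by nlinarith
      have h164 : (0:ℝ) ≤ 1/64 - a^3 := by nlinarith
      have h1256 : (0:ℝ) ≤ 1/256 - a^4 := by nlinarith
      nlinarith [mul_le_mul_of_nonneg_right hl2.le ha0.le,
        mul_nonneg ha0.le h116,
        mul_nonneg (pow_nonneg ha0.le 4) h116,
        mul_nonneg ha0.le h164,
        mul_nonneg ha0.le h1256,
        pow_nonneg ha0.le 7]
    have P1 := mul_le_mul_of_nonneg_left h1 ha0.le
    have P2 := mul_le_mul_of_nonneg_left h2'' (by linarith : (0:ℝ) ≤ 1-a)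
    linarith
  · -- Region B : 1/4 < a < 1/2, via strict monotonicity on [1/4, 1/2]
    set f : ℝ → ℝ := fun y => y * log y + (1-y) * log (1+2*y) with hf
    have hmono : StrictMonoOn f (Set.Icc (1/4 : ℝ) (1/2)) := by
      apply strictMonoOn_of_deriv_pos (convex_Icc _ _)
      · intro x hx
        exact (aux_hasDerivAt x (by linarith [hx.1])).continuousAt.continuousWithinAt
      · intro x hx
        rw [interior_Icc] at hx
        rw [(aux_hasDerivAt x (by linarith [hx.1])).deriv]
        exact aux_deriv_pos x hx.1.le hx.2.le
    have hfhalf : f (1/2) = 0 := by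
      have : (1 : ℝ) + 2 * (1/2) = 2 := by norm_num
      simp only [hf, this]
      rw [show ((1:ℝ)/2) = (2:ℝ)⁻¹ by norm_num, Real.log_inv]
      ring
    have := hmono (Set.mem_Icc.2 ⟨ha4.le, ha2.le⟩) (Set.mem_Icc.2 ⟨by norm_num, le_refl _⟩) ha2
    rw [hfhalf] at this
    exact this.le

theorem s2_lower_bound (a : ℝ) (ha : a ∈ Set.Ioo (0 : ℝ) (1/2))
    (γ : ℝ) (hγ : 0 ≤ γ) :
    (1/2 + a) ^ γ * (1 + γ * Real.log 2) ≤ 1 - γ * a * Real.log a / (1 - a) ∧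
    (0 < γ → (1/2 + a) ^ γ * (1 + γ * Real.log 2) < 1 - γ * a * Real.log a / (1 - a)) := by
  obtain ⟨ha0, ha2⟩ := ha
  have hc0 : (0:ℝ) < 1/2 + a := by linarith
  have hc1 : (1:ℝ)/2 + a < 1 := by linarith
  have h1a : (0:ℝ) < 1 - a := by linarith
  have hkey := key_ineq a ha0 ha2
  set B : ℝ := -(a * log a) / (1-a) with hBdef
  have hB : log (1+2*a) ≤ B := by
    rw [hBdef, le_div_iff₀ h1a]; linarith
  set L : ℝ := -log (1/2+a) with hLdef
  have hL : 0 < L := neg_pos.mpr (Real.log_neg hc0 hc1)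
  have hBpos : 0 < B := lt_of_lt_of_le (Real.log_pos (by linarith)) hB
  have hlogc : log (1+2*a) = log 2 + log (1/2+a) := by
    rw [show (1:ℝ)+2*a = 2*(1/2+a) by ring, Real.log_mul two_ne_zero hc0.ne']
  have hsum : log 2 ≤ L + B := by
    rw [hLdef]; rw [hlogc] at hB; linarith
  have hRHS : 1 - γ * a * Real.log a / (1 - a) = 1 + γ * B := by
    rw [hBdef]; ring
  have hpow : (1/2 + a) ^ γ = (exp (γ*L))⁻¹ := by
    rw [Real.rpow_def_of_pos hc0, ← Real.exp_neg]
    rw [hLdef]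
    ring_nf
  have hmulpos : (0:ℝ) < 1 + γ*B := by nlinarith
  have hl2pos : (0:ℝ) < log 2 := Real.log_pos (by norm_num)
  have hprod : (1 + γ*L) * (1+γ*B) ≥ 1 + γ*log 2 := by
    nlinarith [mul_le_mul_of_nonneg_left hsum hγ,
      mul_nonneg (mul_nonneg (mul_nonneg hγ hγ) hL.le) hBpos.le]
  constructor
  · have hexp_ge : 1 + γ*L ≤ exp (γ*L) := by linarith [Real.add_one_le_exp (γ*L)]
    rw [hRHS, hpow, inv_mul_le_iff₀ (exp_pos _)]
    nlinarith [mul_le_mul_of_nonneg_right hexp_ge hmulpos.le]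
  · intro hγ0
    have hne : γ*L ≠ 0 := by positivity
    have hexp_gt : 1 + γ*L < exp (γ*L) := by linarith [Real.add_one_lt_exp hne]
    rw [hRHS, hpow]
    rw [show (exp (γ*L))⁻¹ * (1 + γ * Real.log 2) = (1 + γ * Real.log 2) / exp (γ*L) by ring,
      div_lt_iff₀ (exp_pos _)]
    nlinarith [mul_lt_mul_of_pos_right hexp_gt hmulpos]
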